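/- Let g(x) with g(0)=1 satisfy g(x) = 1 + x·g(x)·B(x²g(x)), and define h(x) = s(x) + √(s(x)²+1) where s(x) = x·B(x²)/2. Then [xⁿ]h(x)^m = Σ over tuples (m_0,...,m_p) with Σ m_i(2i+1) = n (p = ⌊(n-1)/2⌋) of [p_q(m)/(m_0!···m_p!·2^q)]·b_0^{m_0}···b_p^{m_p}, where q = Σ m_i, p_1(m) = m, and p_q(m) = m·∏_{i=1}^{q-1}(m+q-2i) for q ≥ 2. -/

import Mathlib

open PowerSeries

/-- Substitution of the power series `g` (with zero constant term) into `f`. -/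
noncomputable def pscomp (f g : PowerSeries ℚ) : PowerSeries ℚ :=
  PowerSeries.mk fun N => ∑ n ∈ Finset.range (N + 1), coeff n f * coeff N (g ^ n)

open Finset

set_option linter.unusedSectionVars false
set_option linter.unusedVariables false

noncomputable def pprodAux (r : ℕ) (a : ℚ) : ℚ := ∏ i ∈ Finset.range r, (a - 2 * i)

noncomputable def cc (q : ℕ) (m : ℚ) : ℚ :=
  if q = 0 then 1
  else (m * ∏ i ∈ Finset.Icc 1 (q - 1), (m + (q : ℚ) - 2 * (i : ℚ))) / (q.factorial : ℚ)

lemma cc_zero (m : ℚ) : cc 0 m = 1 := rfl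

lemma pprodAux_succ (r : ℕ) (a : ℚ) : pprodAux (r + 1) a = pprodAux r a * (a - 2 * r) :=
  Finset.prod_range_succ _ _

lemma pprodAux_succ' (r : ℕ) (a : ℚ) : pprodAux (r + 1) a = a * pprodAux r (a - 2) := by
  unfold pprodAux
  rw [Finset.prod_range_succ']
  simp only [Nat.cast_zero, mul_zero, sub_zero]
  rw [mul_comm]
  congr 1
  apply Finset.prod_congr rfl
  intro i _
  push_cast
  ring

lemma cc_succ (r : ℕ) (m : ℚ) :
    cc (r + 1) m = m * pprodAux r (m + r - 1) / ((r + 1).factorial : ℚ) := by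
  unfold cc pprodAux
  rw [if_neg r.succ_ne_zero]
  congr 2
  rw [Nat.add_sub_cancel, ← Finset.Ico_add_one_right_eq_Icc, Finset.prod_Ico_eq_prod_range]
  simp only [Nat.add_sub_cancel]
  apply Finset.prod_congr rfl
  intro i _
  push_cast
  ring

lemma cc_rec (q : ℕ) (m : ℚ) : cc (q + 1) (m + 2) = cc (q + 1) m + 2 * cc q (m + 1) := by
  cases q with
  | zero =>
      simp only [cc_succ, cc_zero]
      norm_num [pprodAux]
  | succ t =>
      rw [cc_succ, cc_succ, cc_succ]
      rw [show m + 2 + ((t+1 : ℕ) : ℚ) - 1 = m + t + 2 by push_cast; ring]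
      rw [pprodAux_succ']
      rw [show m + t + 2 - 2 = m + (t : ℚ) by ring]
      rw [show m + ((t+1 : ℕ) : ℚ) - 1 = m + (t : ℚ) by push_cast; ring]
      rw [pprodAux_succ]
      rw [show m + 1 + (t : ℚ) - 1 = m + (t : ℚ) by ring]
      have h1 : ((t + 1 + 1).factorial : ℚ) ≠ 0 := Nat.cast_ne_zero.mpr (Nat.factorial_ne_zero _)
      have h2 : ((t + 1).factorial : ℚ) ≠ 0 := Nat.cast_ne_zero.mpr (Nat.factorial_ne_zero _)
      rw [Nat.factorial_succ (t+1)]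
      push_cast
      field_simp
      ring

lemma cc_peel (q : ℕ) (m : ℚ) :
    ((q : ℚ) + 1) * ((q : ℚ) + 2) * cc (q + 2) m = (m + q) * (m - q) * cc q m := by
  cases q with
  | zero =>
      simp only [cc_zero, cc_succ]
      norm_num [pprodAux, Finset.prod_range_succ]
      ring
  | succ r =>
      rw [show r + 1 + 2 = (r + 2) + 1 by ring, cc_succ, cc_succ]
      rw [show m + ((r+2 : ℕ) : ℚ) - 1 = m + r + 1 by push_cast; ring]
      rw [pprodAux_succ']
      rw [show m + r + 1 - 2 = m + (r : ℚ) - 1 by ring]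
      rw [pprodAux_succ]
      have h1 : ((r + 2 + 1).factorial : ℚ) ≠ 0 := Nat.cast_ne_zero.mpr (Nat.factorial_ne_zero _)
      have h2 : ((r + 1).factorial : ℚ) ≠ 0 := Nat.cast_ne_zero.mpr (Nat.factorial_ne_zero _)
      rw [Nat.factorial_succ (r+2), Nat.factorial_succ (r+1)]
      push_cast
      field_simp
      ring


lemma cc_one_one : cc 1 1 = 1 := by
  show cc (0 + 1) 1 = 1
  rw [cc_succ]
  simp [pprodAux]

lemma cc_succ_zero (r : ℕ) : cc (r + 1) 0 = 0 := by
  rw [cc_succ]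
  simp

noncomputable def uc (q : ℕ) : ℚ := if q = 1 then 0 else cc q 1

noncomputable def USer : PowerSeries ℚ := PowerSeries.mk uc

lemma uc_zero : uc 0 = 1 := by simp [uc, cc_zero]

lemma uc_def (q : ℕ) (hq : q ≠ 1) : uc q = cc q 1 := by rw [uc, if_neg hq]

lemma uc_one : uc 1 = 0 := by simp [uc]

lemma uc_rec (q : ℕ) : ((q : ℚ) + 2) * uc (q + 2) = (1 - q) * uc q := by
  rcases eq_or_ne q 1 with rfl | hq
  · have h3 : uc 3 = 0 := by
      simp [uc, cc_succ, pprodAux, Finset.prod_range_succ]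
    simp [h3, uc_one]
  · have hpeel := cc_peel q 1
    have hq2 : uc (q + 2) = cc (q + 2) 1 := by
      have : q + 2 ≠ 1 := by omega
      simp [uc, this]
    have hqq : uc q = cc q 1 := by simp [uc, hq]
    have hne : ((q : ℚ) + 1) ≠ 0 := by positivity
    rw [hq2, hqq]
    apply mul_left_cancel₀ hne
    calc ((q:ℚ)+1) * (((q:ℚ)+2) * cc (q+2) 1) = ((q:ℚ)+1)*((q:ℚ)+2)*cc (q+2) 1 := by ring
    _ = (1 + q) * (1 - q) * cc q 1 := hpeel
    _ = ((q:ℚ)+1) * ((1-q) * cc q 1) := by ring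

lemma coeff_USer (n : ℕ) : coeff n USer = uc n := coeff_mk _ _

lemma USer_ode : (1 + X ^ 2) * derivativeFun USer = X * USer := by
  show (1 + X ^ 2) * d⁄dX ℚ USer = X * USer
  ext N
  rw [add_mul, one_mul, map_add, PowerSeries.coeff_X_pow_mul']
  rcases N with _ | N
  · rw [coeff_derivativeFun]; simp [ coeff_USer, uc_one]
  · rw [PowerSeries.coeff_succ_X_mul, coeff_USer, coeff_derivativeFun, coeff_USer]
    rcases N with _ | N
    · norm_num [coeff_USer, uc_zero]
      have h0 := uc_rec 0
      norm_num [uc_zero] at h0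
      linarith [h0]
    · rw [if_pos (by omega : 2 ≤ N + 1 + 1)]
      have : N + 1 + 1 - 2 = N := by omega
      rw [this, coeff_derivativeFun, coeff_USer]
      have hr := uc_rec (N + 1)
      push_cast at hr ⊢
      linear_combination hr

lemma USer_ode' : (1 + X ^ 2) * (d⁄dX ℚ USer) = X * USer := USer_ode

lemma USer_sq : USer * USer = 1 + X ^ 2 := by
  set H : ℚ⟦X⟧ := USer * USer - 1 - X ^ 2 with hHdef
  have hdH : d⁄dX ℚ H = 2 * USer * d⁄dX ℚ USer - 2 * X := by
    rw [hHdef]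
    rw [map_sub, map_sub, Derivation.leibniz, Derivation.leibniz_pow]
    simp [smul_eq_mul]
    ring
  have H_ode : (1 + X ^ 2) * d⁄dX ℚ H = X * (H + H) := by
    rw [hdH]
    linear_combination (2 * USer) * USer_ode'
  have hu0 : constantCoeff USer = 1 := by
    rw [← coeff_zero_eq_constantCoeff_apply, coeff_USer, uc_zero]
  have h0 : coeff 0 H = 0 := by
    simp [hHdef, coeff_mul, coeff_X_pow, hu0]
  have hrel0 : coeff 1 H = 0 := by
    have := congrArg (coeff 0) H_ode
    rw [add_mul, one_mul, map_add, PowerSeries.coeff_X_pow_mul'] at this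
    simp only [coeff_derivative] at this
    rw [PowerSeries.coeff_zero_X_mul] at this
    norm_num at this
    exact this
  have hrelS : ∀ N : ℕ, coeff (N + 2) H * ((N : ℚ) + 2) + coeff N H * N
      = 2 * coeff N H := by
    intro N
    have := congrArg (coeff (N + 1)) H_ode
    rw [add_mul, one_mul, map_add, PowerSeries.coeff_X_pow_mul',
        PowerSeries.coeff_succ_X_mul, map_add] at this
    rcases N with _ | N
    · rw [if_neg (by omega)] at this
      simp only [coeff_derivative] at this
      push_cast at this ⊢
      linarith [this]
    · rw [if_pos (by omega)] at this
      have he : N + 1 + 1 - 2 = N := by omega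
      rw [he] at this
      simp only [coeff_derivative] at this
      push_cast at this ⊢
      linarith [this]
  have main : ∀ N, coeff N H = 0 := by
    intro N
    induction N using Nat.strong_induction_on with
    | _ N ih =>
      match N with
      | 0 => exact h0
      | 1 => exact hrel0
      | (N+2) =>
        have hN := ih N (by omega)
        have := hrelS N
        rw [hN] at this
        simp only [zero_mul, mul_zero, add_zero] at this
        have hne : ((N : ℚ) + 2) ≠ 0 := by positivity
        exact (mul_eq_zero.mp this).resolve_right hne
  have : H = 0 := PowerSeries.ext fun n => by rw [main n, map_zero]
  rw [hHdef] at this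
  linear_combination this

noncomputable def Vw (s : PowerSeries ℚ) (w : ℕ → ℚ) : PowerSeries ℚ :=
  PowerSeries.mk fun n => ∑ q ∈ Finset.range (n + 1), w q * coeff n (s ^ q)

lemma coeff_Vw (s : PowerSeries ℚ) (w : ℕ → ℚ) (n : ℕ) :
    coeff n (Vw s w) = ∑ q ∈ Finset.range (n + 1), w q * coeff n (s ^ q) := coeff_mk _ _

lemma triangle_swap (N : ℕ) (F : ℕ → ℕ → ℚ) (hF : ∀ a b, N < a + b → F a b = 0) :
    ∑ Q ∈ Finset.range (N + 1), ∑ p ∈ Finset.HasAntidiagonal.antidiagonal Q, F p.1 p.2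
      = ∑ a ∈ Finset.range (N + 1), ∑ b ∈ Finset.range (N + 1), F a b := by
  rw [Finset.sum_sigma', ← Finset.sum_product']
  rw [← Finset.sum_filter_add_sum_filter_not ((Finset.range (N+1)) ×ˢ (Finset.range (N+1)))
      (fun p => p.1 + p.2 ≤ N)]
  have h2 : ∑ p ∈ Finset.filter (fun p => ¬(p.1 + p.2 ≤ N))
      ((Finset.range (N+1)) ×ˢ (Finset.range (N+1))), F p.1 p.2 = 0 := by
    apply Finset.sum_eq_zero
    intro p hp
    simp only [Finset.mem_filter] at hp
    exact hF _ _ (by omega)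
  rw [h2, add_zero]
  apply Finset.sum_nbij' (i := fun x => (x.2.1, x.2.2)) (j := fun p => ⟨p.1 + p.2, p⟩)
  · intro x hx
    simp only [Finset.mem_sigma, Finset.mem_range, Finset.HasAntidiagonal.mem_antidiagonal] at hx
    simp only [Finset.mem_filter, Finset.mem_product, Finset.mem_range]
    omega
  · intro p hp
    simp only [Finset.mem_filter, Finset.mem_product, Finset.mem_range] at hp
    rw [Finset.mem_sigma]
    exact ⟨Finset.mem_range.mpr (by show p.1 + p.2 < N + 1; omega), Finset.HasAntidiagonal.mem_antidiagonal.mpr rfl⟩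
  · rintro ⟨Q, a, b⟩ hx
    simp only [Finset.mem_sigma, Finset.mem_range, Finset.HasAntidiagonal.mem_antidiagonal] at hx
    obtain ⟨h1, h2⟩ := hx
    subst h2
    rfl
  · intro p _
    rfl
  · intro x _
    rfl

section
variable {s : PowerSeries ℚ} (hs1 : ∀ d q : ℕ, d < q → coeff d (s ^ q) = 0)
include hs1

lemma coeff_Vw_ext (n N : ℕ) (hnN : n ≤ N) (w : ℕ → ℚ) :
    coeff n (Vw s w) = ∑ q ∈ Finset.range (N + 1), w q * coeff n (s ^ q) := by
  rw [coeff_Vw]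
  apply Finset.sum_subset (Finset.range_subset_range.mpr (by omega))
  intro q hq hq'
  simp only [Finset.mem_range] at hq hq'
  rw [hs1 n q (by omega), mul_zero]

lemma Vw_mul (w w' : ℕ → ℚ) :
    Vw s w * Vw s w' = Vw s (fun Q => ∑ p ∈ Finset.HasAntidiagonal.antidiagonal Q, w p.1 * w' p.2) := by
  ext N
  rw [coeff_mul, coeff_Vw]
  calc
    ∑ p ∈ Finset.HasAntidiagonal.antidiagonal N, coeff p.1 (Vw s w) * coeff p.2 (Vw s w')
        = ∑ p ∈ Finset.HasAntidiagonal.antidiagonal N, ∑ q1 ∈ Finset.range (N+1), ∑ q2 ∈ Finset.range (N+1),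
            w q1 * coeff p.1 (s ^ q1) * (w' q2 * coeff p.2 (s ^ q2)) := by
      apply Finset.sum_congr rfl
      intro p hp
      rw [Finset.HasAntidiagonal.mem_antidiagonal] at hp
      rw [coeff_Vw_ext hs1 p.1 N (by omega), coeff_Vw_ext hs1 p.2 N (by omega),
        Finset.sum_mul_sum]
    _ = ∑ q1 ∈ Finset.range (N+1), ∑ q2 ∈ Finset.range (N+1),
          w q1 * w' q2 * coeff N (s ^ (q1 + q2)) := by
      rw [Finset.sum_comm]
      apply Finset.sum_congr rfl
      intro q1 _
      rw [Finset.sum_comm]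
      apply Finset.sum_congr rfl
      intro q2 _
      have : ∀ p ∈ Finset.HasAntidiagonal.antidiagonal N,
          w q1 * coeff p.1 (s ^ q1) * (w' q2 * coeff p.2 (s ^ q2))
            = w q1 * w' q2 * (coeff p.1 (s ^ q1) * coeff p.2 (s ^ q2)) := by
        intro p _; ring
      rw [Finset.sum_congr rfl this, ← Finset.mul_sum, ← coeff_mul, ← pow_add]
    _ = ∑ Q ∈ Finset.range (N+1), ∑ p ∈ Finset.HasAntidiagonal.antidiagonal Q,
          w p.1 * w' p.2 * coeff N (s ^ (p.1 + p.2)) := by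
      rw [triangle_swap N (fun a b => w a * w' b * coeff N (s ^ (a + b)))
        (fun a b hab => by
          show w a * w' b * coeff N (s ^ (a + b)) = 0
          rw [hs1 N (a+b) hab, mul_zero])]
    _ = ∑ Q ∈ Finset.range (N+1),
          (∑ p ∈ Finset.HasAntidiagonal.antidiagonal Q, w p.1 * w' p.2) * coeff N (s ^ Q) := by
      apply Finset.sum_congr rfl
      intro Q _
      rw [Finset.sum_mul]
      apply Finset.sum_congr rfl
      intro p hp
      rw [Finset.HasAntidiagonal.mem_antidiagonal] at hp
      rw [hp]

lemma Vw_one : Vw s (fun q => if q = 0 then 1 else 0) = 1 := by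
  ext N
  rw [coeff_Vw]
  simp only [ite_mul, one_mul, zero_mul]
  rw [Finset.sum_ite_eq' (Finset.range (N+1)) 0 (fun q => coeff N (s ^ q))]
  rw [if_pos (Finset.mem_range.mpr (by omega)), pow_zero]

lemma Vw_s : Vw s (fun q => if q = 1 then 1 else 0) = s := by
  ext N
  rw [coeff_Vw]
  simp only [ite_mul, one_mul, zero_mul]
  rw [Finset.sum_ite_eq' (Finset.range (N+1)) 1 (fun q => coeff N (s ^ q))]
  rcases N with _ | N
  · rw [if_neg (by simp)]
    exact (pow_one s ▸ hs1 0 1 zero_lt_one).symm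
  · rw [if_pos (Finset.mem_range.mpr (by omega)), pow_one]

end

lemma Vw_add (s : PowerSeries ℚ) (w w' : ℕ → ℚ) :
    Vw s w + Vw s w' = Vw s (fun q => w q + w' q) := by
  ext N
  rw [map_add, coeff_Vw, coeff_Vw, coeff_Vw, ← Finset.sum_add_distrib]
  apply Finset.sum_congr rfl
  intro q _
  ring

lemma Vw_two_mul (s : PowerSeries ℚ) (w : ℕ → ℚ) :
    2 * Vw s w = Vw s (fun q => 2 * w q) := by
  ext N
  rw [show (2 : PowerSeries ℚ) = C 2 from (map_ofNat C 2).symm, coeff_C_mul, coeff_Vw, coeff_Vw,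
    Finset.mul_sum]
  apply Finset.sum_congr rfl
  intro q _
  ring

section
variable {B s : PowerSeries ℚ} (hs : (2 : PowerSeries ℚ) * s = X * pscomp B (X ^ 2))
include hs

lemma two_eq_C : (2 : PowerSeries ℚ) = C 2 := (map_ofNat C 2).symm

lemma hsX : s = X * (C (1/2) * pscomp B (X ^ 2)) := by
  have hC : (C (1/2)) * (2 : PowerSeries ℚ) = 1 := by
    rw [two_eq_C hs, ← map_mul]
    norm_num
  calc s = (C (1/2) * 2) * s := by rw [hC, one_mul]
  _ = C (1/2) * (X * pscomp B (X ^ 2)) := by rw [mul_assoc, hs]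
  _ = X * (C (1/2) * pscomp B (X ^ 2)) := by ring

lemma sfact1 : ∀ d q : ℕ, d < q → coeff d (s ^ q) = 0 := by
  intro d q hdq
  rw [hsX hs, mul_pow, PowerSeries.coeff_X_pow_mul', if_neg (by omega)]

lemma coeff_pscomp_even (i : ℕ) : coeff (2 * i) (pscomp B (X ^ 2)) = coeff i B := by
  unfold pscomp
  rw [coeff_mk]
  have h1 : ∀ j ∈ Finset.range (2 * i + 1),
      coeff j B * coeff (2 * i) (((X : PowerSeries ℚ) ^ 2) ^ j)
        = if j = i then coeff j B else 0 := by
    intro j hj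
    rw [← pow_mul, PowerSeries.coeff_X_pow]
    rcases eq_or_ne j i with rfl | hne
    · rw [if_pos (by omega), if_pos rfl, mul_one]
    · rw [if_neg (by omega), if_neg hne, mul_zero]
  rw [Finset.sum_congr rfl h1, Finset.sum_ite_eq' (Finset.range (2 * i + 1)) i
    (fun j => coeff j B), if_pos (Finset.mem_range.mpr (by omega))]

lemma coeff_pscomp_odd (i : ℕ) : coeff (2 * i + 1) (pscomp B (X ^ 2)) = 0 := by
  unfold pscomp
  rw [coeff_mk]
  apply Finset.sum_eq_zero
  intro j _
  rw [← pow_mul, PowerSeries.coeff_X_pow, if_neg (by omega), mul_zero]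

lemma sfact2 (i : ℕ) : coeff (2 * i + 1) s = coeff i B / 2 := by
  have h := congrArg (coeff (2 * i + 1)) hs
  rw [two_eq_C hs, coeff_C_mul, PowerSeries.coeff_succ_X_mul, coeff_pscomp_even hs] at h
  linarith [h]

lemma sfact3 (i : ℕ) : coeff (2 * i) s = 0 := by
  rcases i with _ | j
  · have h := sfact1 hs 0 1 zero_lt_one
    rw [pow_one] at h
    simpa using h
  · have h := congrArg (coeff (2 * (j + 1))) hs
    rw [two_eq_C hs, coeff_C_mul, show 2 * (j + 1) = (2 * j + 1) + 1 by omega,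
      PowerSeries.coeff_succ_X_mul, coeff_pscomp_odd hs] at h
    rw [show 2 * (j + 1) = 2 * j + 1 + 1 by omega]
    linarith [h]

end

section
variable {s h : PowerSeries ℚ} (hs1 : ∀ d q : ℕ, d < q → coeff d (s ^ q) = 0)
include hs1

lemma s_mul_Vw (w : ℕ → ℚ) :
    s * Vw s w = Vw s (fun Q => if Q = 0 then 0 else w (Q - 1)) := by
  rw [show s * Vw s w = Vw s (fun q => if q = 1 then 1 else 0) * Vw s w from by
    rw [Vw_s hs1]]
  rw [Vw_mul hs1]
  apply congrArg
  funext Q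
  rw [Finset.Nat.sum_antidiagonal_eq_sum_range_succ_mk]
  have h1 : ∀ k ∈ Finset.range (Q + 1),
      (if k = 1 then (1:ℚ) else 0) * w (Q - k) = if k = 1 then w (Q - k) else 0 := by
    intro k _
    split_ifs <;> ring
  rw [Finset.sum_congr rfl h1, Finset.sum_ite_eq' (Finset.range (Q+1)) 1 (fun k => w (Q - k))]
  rcases Q with _ | Q
  · rw [if_neg (by simp), if_pos rfl]
  · rw [if_pos (Finset.mem_range.mpr (by omega)), if_neg (by omega)]

lemma Vw_s_sq : Vw s (fun q => if q = 2 then 1 else 0) = s ^ 2 := by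
  have h1 : s ^ 2 = s * Vw s (fun q => if q = 1 then 1 else 0) := by rw [Vw_s hs1, sq]
  rw [h1, s_mul_Vw hs1]
  apply congrArg
  funext Q
  rcases Q with _ | Q
  · simp
  · simp only [Nat.succ_ne_zero, if_false, Nat.add_sub_cancel]
    by_cases hQ : Q + 1 = 2
    · rw [if_pos hQ, if_pos (by omega)]
    · rw [if_neg hQ, if_neg (by omega)]

lemma VwU_sq : Vw s uc * Vw s uc = 1 + s ^ 2 := by
  rw [Vw_mul hs1 uc uc]
  have hconv : ∀ Q, (∑ p ∈ Finset.HasAntidiagonal.antidiagonal Q, uc p.1 * uc p.2)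
      = (if Q = 0 then (1:ℚ) else 0) + (if Q = 2 then 1 else 0) := by
    intro Q
    have h1 : ∑ p ∈ Finset.HasAntidiagonal.antidiagonal Q, uc p.1 * uc p.2 = coeff Q (USer * USer) := by
      rw [coeff_mul]
      exact (Finset.sum_congr rfl fun p _ => by rw [coeff_USer, coeff_USer]).symm
    rw [h1, USer_sq, map_add, coeff_one, coeff_X_pow]
  rw [show (fun Q => ∑ p ∈ Finset.HasAntidiagonal.antidiagonal Q, uc p.1 * uc p.2)
      = fun Q => (if Q = 0 then (1:ℚ) else 0) + (if Q = 2 then 1 else 0) from funext hconv]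
  rw [← Vw_add, Vw_one hs1, Vw_s_sq hs1]

variable (hh : (h - s) ^ 2 = s ^ 2 + 1) (hh0 : constantCoeff (h - s) = 1)
include hh hh0

lemma hVwU : h - s = Vw s uc := by
  have hC : constantCoeff (Vw s uc) = 1 := by
    rw [← coeff_zero_eq_constantCoeff_apply, coeff_Vw]
    simp [uc_zero]
  have hprod : ((h - s) - Vw s uc) * ((h - s) + Vw s uc) = 0 := by
    have e2 : (Vw s uc) * (Vw s uc) = 1 + s ^ 2 := VwU_sq hs1
    linear_combination hh - e2
  have hne : (h - s) + Vw s uc ≠ 0 := fun e => by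
    have h2 := congrArg (constantCoeff) e
    rw [map_add, hh0, hC] at h2
    norm_num at h2
  exact sub_eq_zero.mp ((mul_eq_zero.mp hprod).resolve_right hne)

lemma key : ∀ m : ℕ, h ^ m = Vw s (fun q => cc q (m : ℚ)) := by
  have hsq : h ^ 2 = 2 * s * h + 1 := by linear_combination hh
  intro m
  induction m using Nat.strong_induction_on with
  | _ m ih =>
    match m with
    | 0 =>
      rw [pow_zero, ← Vw_one hs1]
      apply congrArg
      funext q
      rcases q with _ | r
      · rw [if_pos rfl, Nat.cast_zero, cc_zero]
      · rw [if_neg (by omega), Nat.cast_zero, cc_succ_zero]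
    | 1 =>
      rw [pow_one]
      have hU := hVwU hs1 hh hh0
      have hh' : h = s + Vw s uc := by rw [← hU]; ring
      have hh'' : h = Vw s (fun q => if q = 1 then 1 else 0) + Vw s uc := by
        rw [Vw_s hs1]; exact hh'
      rw [hh'', Vw_add]
      apply congrArg
      funext q
      rw [Nat.cast_one]
      match q with
      | 0 => rw [uc_zero, cc_zero, if_neg (by omega)]; norm_num
      | 1 => rw [uc_one, cc_one_one, if_pos rfl]; norm_num
      | (r+2) => rw [uc_def _ (by omega), if_neg (by omega), zero_add]
    | (m+2) =>
      have ih0 := ih m (by omega)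
      have ih1 := ih (m+1) (by omega)
      calc h ^ (m+2) = 2 * s * h ^ (m+1) + h ^ m := by
            have : h ^ (m + 2) = (2 * s * h + 1) * h ^ m := by rw [← hsq]; ring
            rw [this]; ring
      _ = 2 * (s * Vw s (fun q => cc q ((m:ℚ)+1))) + Vw s (fun q => cc q (m:ℚ)) := by
            rw [ih0, ih1]
            push_cast
            ring
      _ = Vw s (fun q => cc q ((m:ℚ)+2)) := by
            rw [s_mul_Vw hs1, Vw_two_mul, Vw_add]
            apply congrArg
            funext q
            rcases q with _ | r
            · norm_num [cc_zero]
            · rw [if_neg (by omega), Nat.add_sub_cancel, cc_rec r (m:ℚ)]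
              ring
      _ = Vw s (fun q => cc q ((m+2 : ℕ) : ℚ)) := by push_cast; rfl
end

lemma coeff_s_pow (B s : PowerSeries ℚ)
    (sf2 : ∀ i, coeff (2*i+1) s = coeff i B / 2)
    (sf3 : ∀ i, coeff (2*i) s = 0)
    (n q : ℕ) (hn : 1 ≤ n) :
    coeff n (s ^ q)
      = ∑ k ∈ (Finset.piAntidiag (Finset.univ : Finset (Fin ((n-1)/2+1))) q).filter
          (fun k : Fin ((n-1)/2+1) → ℕ => ∑ i, k i * (2 * (i:ℕ) + 1) = n),
        (Nat.multinomial Finset.univ k : ℚ) *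
          ∏ i : Fin ((n-1)/2+1), (coeff (i:ℕ) B / 2) ^ k i := by
  set p := (n-1)/2 with hp
  set T : PowerSeries ℚ :=
    ∑ i ∈ (Finset.univ : Finset (Fin (p+1))), C (coeff (i:ℕ) B / 2) * X ^ (2*(i:ℕ)+1)
    with hTdef
  have hT : ∀ d, d ≤ n → coeff d T = coeff d s := by
    intro d hd
    rw [hTdef, map_sum]
    simp_rw [coeff_C_mul, coeff_X_pow]
    rcases Nat.even_or_odd d with ⟨j, hj⟩ | ⟨j, hj⟩
    · have hz : ∀ i ∈ (Finset.univ : Finset (Fin (p+1))),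
          (coeff (i:ℕ) B / 2) * (if d = 2*(i:ℕ)+1 then (1:ℚ) else 0) = 0 := by
        intro i _
        rw [if_neg (by omega), mul_zero]
      rw [Finset.sum_congr rfl hz, Finset.sum_const_zero, show d = 2*j by omega, sf3 j]
    · have hjp : j ≤ p := by rw [hp]; omega
      rw [Finset.sum_eq_single (⟨j, by omega⟩ : Fin (p+1))]
      · rw [if_pos (by simp; omega), mul_one, show d = 2*j+1 by omega, sf2 j]
      · intro i _ hne
        rw [if_neg, mul_zero]
        intro hcon
        exact hne (Fin.ext (show (i:ℕ) = j by omega))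
      · intro habs
        exact absurd (Finset.mem_univ _) habs
  have hpow : coeff n (s ^ q) = coeff n (T ^ q) := by
    rw [PowerSeries.coeff_pow, PowerSeries.coeff_pow]
    apply Finset.sum_congr rfl
    intro l hl
    rw [Finset.mem_finsuppAntidiag] at hl
    apply Finset.prod_congr rfl
    intro i hi
    have hle : l i ≤ n := by
      obtain ⟨hsum, _⟩ := hl
      calc l i ≤ ∑ j ∈ Finset.range q, l j :=
            Finset.single_le_sum (fun _ _ => Nat.zero_le _) hi
      _ = n := hsum
    exact (hT _ hle).symm
  rw [hpow, hTdef, Finset.sum_pow_eq_sum_piAntidiag, map_sum]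
  have hterm : ∀ k ∈ Finset.piAntidiag (Finset.univ : Finset (Fin (p+1))) q,
      coeff n ((Nat.multinomial Finset.univ k : PowerSeries ℚ) *
          ∏ i : Fin (p+1), (C (coeff (i:ℕ) B / 2) * X ^ (2*(i:ℕ)+1)) ^ k i)
        = if ∑ i : Fin (p+1), k i * (2*(i:ℕ)+1) = n
            then (Nat.multinomial Finset.univ k : ℚ) *
              ∏ i : Fin (p+1), (coeff (i:ℕ) B / 2) ^ k i
            else 0 := by
    intro k _
    have hprod : (∏ i : Fin (p+1), (C (coeff (i:ℕ) B / 2) * X ^ (2*(i:ℕ)+1)) ^ k i)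
        = C (∏ i : Fin (p+1), (coeff (i:ℕ) B / 2) ^ k i)
          * X ^ (∑ i : Fin (p+1), k i * (2*(i:ℕ)+1)) := by
      simp_rw [mul_pow, ← pow_mul, ← map_pow]
      rw [Finset.prod_mul_distrib, ← map_prod]
      congr 1
      rw [Finset.prod_pow_eq_pow_sum]
      congr 1
      exact Finset.sum_congr rfl fun i _ => mul_comm _ _
    rw [hprod, show ((Nat.multinomial Finset.univ k : PowerSeries ℚ))
        = C ((Nat.multinomial Finset.univ k : ℚ)) from by rw [map_natCast C],
      ← mul_assoc, ← map_mul, coeff_C_mul, coeff_X_pow]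
    by_cases hcond : ∑ i, k i * (2*(i:ℕ)+1) = n
    · rw [if_pos hcond, if_pos hcond.symm, mul_one]
    · rw [if_neg hcond, if_neg (fun e => hcond e.symm), mul_zero]
  rw [Finset.sum_congr rfl hterm, Finset.sum_ite, Finset.sum_const_zero, add_zero]

theorem stmt_19 (B g s h : PowerSeries ℚ) (hg0 : constantCoeff g = 1)
    (hg : g = 1 + X * g * pscomp B (X ^ 2 * g))
    (hs : (2 : PowerSeries ℚ) * s = X * pscomp B (X ^ 2))
    (hh : (h - s) ^ 2 = s ^ 2 + 1) (hh0 : constantCoeff (h - s) = 1) :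
    ∀ n m : ℕ, 1 ≤ n → 1 ≤ m →
      coeff n (h ^ m) =
        ∑ f ∈ Finset.filter
            (fun f : Fin ((n - 1) / 2 + 1) → ℕ => ∑ i, f i * (2 * (i : ℕ) + 1) = n)
            (Fintype.piFinset fun _ => Finset.range (n + 1)),
          (let q := ∑ i, f i
           ((m : ℚ) * ∏ i ∈ Finset.Icc 1 (q - 1), ((m : ℚ) + q - 2 * i)) /
             ((∏ i, ((f i).factorial : ℚ)) * 2 ^ q)) *
          ∏ i : Fin ((n - 1) / 2 + 1), (coeff (i : ℕ) B) ^ f i := by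
  intro n m hn hm
  have hs1 := sfact1 hs
  rw [key hs1 hh hh0 m, coeff_Vw]
  have hstep : ∀ q ∈ Finset.range (n + 1),
      cc q (m : ℚ) * coeff n (s ^ q)
        = ∑ k ∈ (Finset.piAntidiag (Finset.univ : Finset (Fin ((n-1)/2+1))) q).filter
            (fun k : Fin ((n-1)/2+1) → ℕ => ∑ i, k i * (2 * (i:ℕ) + 1) = n),
          cc q (m : ℚ) * ((Nat.multinomial Finset.univ k : ℚ) *
            ∏ i : Fin ((n-1)/2+1), (coeff (i:ℕ) B / 2) ^ k i) := by
    intro q _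
    rw [coeff_s_pow B s (sfact2 hs) (sfact3 hs) n q hn, Finset.mul_sum]
  rw [Finset.sum_congr rfl hstep, Finset.sum_sigma']
  apply Finset.sum_nbij' (i := fun x => x.2) (j := fun f => ⟨∑ i, f i, f⟩)
  · rintro ⟨q, k⟩ hx
    rw [Finset.mem_sigma] at hx
    obtain ⟨hq, hk⟩ := hx
    rw [Finset.mem_filter] at hk
    obtain ⟨hk1, hk2⟩ := hk
    rw [Finset.mem_piAntidiag] at hk1
    dsimp only at hk1 hk2 ⊢
    rw [Finset.mem_filter]
    refine ⟨?_, hk2⟩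
    rw [Fintype.mem_piFinset]
    intro i
    rw [Finset.mem_range]
    have h1 : k i ≤ k i * (2 * (i:ℕ) + 1) := Nat.le_mul_of_pos_right _ (by omega)
    have h2 : k i * (2 * (i:ℕ) + 1) ≤ ∑ j, k j * (2 * (j:ℕ) + 1) :=
      Finset.single_le_sum (f := fun j => k j * (2 * (j:ℕ) + 1))
        (fun _ _ => Nat.zero_le _) (Finset.mem_univ i)
    omega
  · intro f hf
    rw [Finset.mem_filter] at hf
    obtain ⟨hf1, hf2⟩ := hf
    rw [Finset.mem_sigma]
    constructor
    · rw [Finset.mem_range]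
      show (∑ i, f i) < n + 1
      have h2 : ∑ j, f j ≤ ∑ j, f j * (2 * (j:ℕ) + 1) :=
        Finset.sum_le_sum (fun j _ => Nat.le_mul_of_pos_right _ (by omega))
      omega
    · rw [Finset.mem_filter]
      refine ⟨?_, hf2⟩
      rw [Finset.mem_piAntidiag]
      exact ⟨rfl, fun i _ => Finset.mem_univ i⟩
  · rintro ⟨q, k⟩ hx
    rw [Finset.mem_sigma] at hx
    obtain ⟨hq, hk⟩ := hx
    rw [Finset.mem_filter] at hk
    rw [Finset.mem_piAntidiag] at hk
    obtain ⟨⟨hk1, -⟩, -⟩ := hk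
    dsimp only at hk1 ⊢
    subst hk1
    rfl
  · intro f _
    rfl
  · rintro ⟨q, k⟩ hx
    rw [Finset.mem_sigma] at hx
    obtain ⟨hq, hk⟩ := hx
    rw [Finset.mem_filter] at hk
    obtain ⟨hk1, hk2⟩ := hk
    rw [Finset.mem_piAntidiag] at hk1
    obtain ⟨hk1, -⟩ := hk1
    dsimp only at hk1
    show cc q (m : ℚ) * ((Nat.multinomial Finset.univ k : ℚ) *
        ∏ i : Fin ((n-1)/2+1), (coeff (i:ℕ) B / 2) ^ k i)
      = (((m : ℚ) * ∏ i ∈ Finset.Icc 1 ((∑ i, k i) - 1),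
            ((m : ℚ) + (∑ i, k i : ℕ) - 2 * i)) /
          ((∏ i, ((k i).factorial : ℚ)) * 2 ^ (∑ i, k i))) *
        ∏ i : Fin ((n - 1) / 2 + 1), (coeff (i : ℕ) B) ^ k i
    rw [hk1]
    dsimp only at hk2
    have hq0 : q ≠ 0 := by
      intro h0
      rw [h0] at hk1
      have hz := Finset.sum_eq_zero_iff.mp hk1
      rw [Finset.sum_eq_zero (fun i _ => by rw [hz i (Finset.mem_univ i), zero_mul])] at hk2
      omega
    have hfacne : (∏ i, ((k i).factorial : ℚ)) ≠ 0 :=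
      Finset.prod_ne_zero_iff.mpr fun i _ => Nat.cast_ne_zero.mpr (Nat.factorial_ne_zero _)
    have hqfacne : ((q.factorial : ℚ)) ≠ 0 := Nat.cast_ne_zero.mpr (Nat.factorial_ne_zero _)
    have hmult : (Nat.multinomial Finset.univ k : ℚ)
        = (q.factorial : ℚ) / ∏ i, ((k i).factorial : ℚ) := by
      have hspec := Nat.multinomial_spec (Finset.univ : Finset (Fin ((n-1)/2+1))) k
      rw [hk1] at hspec
      have hc : (∏ i, ((k i).factorial : ℚ)) * (Nat.multinomial Finset.univ k : ℚ)
          = (q.factorial : ℚ) := by exact_mod_cast congrArg (Nat.cast : ℕ → ℚ) hspec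
      rw [eq_div_iff hfacne]
      linarith [hc]
    have hprod2 : (∏ i : Fin ((n-1)/2+1), (coeff (i:ℕ) B / 2) ^ k i)
        = (∏ i : Fin ((n-1)/2+1), (coeff (i:ℕ) B) ^ k i) / 2 ^ q := by
      simp_rw [div_pow]
      rw [Finset.prod_div_distrib, Finset.prod_pow_eq_pow_sum, hk1]
    rw [hmult, hprod2, cc, if_neg hq0]
    have h2q : ((2:ℚ)) ^ q ≠ 0 := pow_ne_zero _ two_ne_zero
    field_simp
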